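/- Let φ: Γ → B be a strong formal subdivision of rank 0 with Γ lower Eulerian and B Eulerian. Then under the specialization c' ↦ c, d' ↦ d, e ↦ 1, the mixed cd-index Ω_φ(c',d',c,d,e) specializes to the cd-index Φ_Γ of Γ. -/

import Mathlib

open scoped Classical

noncomputable section

namespace CDIndex

variable {α β : Type}

/-- The natural rank function of a graded poset: `rho x` is one less than the largest
cardinality of a chain contained in `Set.Iic x` (i.e. the length of a maximal chain of
the interval `[0̂, x]`). -/
def rho [PartialOrder α] (x : α) : ℕ :=
  sSup {k : ℕ | ∃ s : Finset α,
    IsChain (· ≤ ·) (s : Set α) ∧ (s : Set α) ⊆ Set.Iic x ∧ s.card = k + 1}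

/-- A subset `S` of a poset is graded of rank `n` if every maximal chain of `S`
has exactly `n + 1` elements (i.e. length `n`). -/
def IsGradedSetOfRank [PartialOrder α] (S : Set α) (n : ℕ) : Prop :=
  ∀ s : Finset α, (s : Set α) ⊆ S → IsChain (· ≤ ·) (s : Set α) →
    (∀ t : Finset α, (t : Set α) ⊆ S → IsChain (· ≤ ·) (t : Set α) → s ⊆ t → s = t) →
    s.card = n + 1

/-- A poset is graded of rank `n` if every maximal chain has length `n`. -/
def IsGradedOfRank (α : Type) [PartialOrder α] (n : ℕ) : Prop :=
  IsGradedSetOfRank (Set.univ : Set α) n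

/-- Every interval `[s, t]` with `s < t`, `s, t ∈ S`, has equally many elements of even
rank and of odd rank. -/
def BalancedIntervalsIn [PartialOrder α] (S : Set α) : Prop :=
  ∀ s ∈ S, ∀ t ∈ S, s < t →
    {y ∈ Set.Icc s t | Even (rho y)}.ncard = {y ∈ Set.Icc s t | Odd (rho y)}.ncard

/-- An Eulerian poset of rank `n`: a graded poset with `0̂` and `1̂` in which every
interval of positive length has equally many elements of each parity of rank. -/
def IsEulerianOfRank (α : Type) [PartialOrder α] (n : ℕ) : Prop :=
  (∃ b : α, ∀ z, b ≤ z) ∧ (∃ t : α, ∀ z, z ≤ t) ∧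
    IsGradedOfRank α n ∧ BalancedIntervalsIn (Set.univ : Set α)

/-- A lower Eulerian poset of rank `n`: a graded poset with `0̂` all of whose intervals
are Eulerian. -/
def IsLowerEulerianOfRank (α : Type) [PartialOrder α] (n : ℕ) : Prop :=
  (∃ b : α, ∀ z, b ≤ z) ∧ IsGradedOfRank α n ∧ BalancedIntervalsIn (Set.univ : Set α)

/-- A lower order ideal `S` (of a poset) which is lower Eulerian of rank `n`. -/
def IsLowerEulerianSetOfRank [PartialOrder α] (S : Set α) (n : ℕ) : Prop :=
  IsGradedSetOfRank S n ∧ BalancedIntervalsIn S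

/-- The boundary of (a lower order ideal `S` of) a graded poset of rank `n`: the lower
order ideal generated by the rank `n - 1` elements which are covered by exactly one
element. -/
def boundaryIn [PartialOrder α] (S : Set α) (n : ℕ) : Set α :=
  {y | y ∈ S ∧ ∃ x ∈ S, rho x = n - 1 ∧ {z ∈ S | x ⋖ z}.ncard = 1 ∧ y ≤ x}

/-- The boundary `∂P` of a graded poset of rank `n`. -/
def boundary (α : Type) [PartialOrder α] (n : ℕ) : Set α :=
  boundaryIn (Set.univ : Set α) n

/-- `α` is a near-Eulerian poset of rank `n`: it is obtained from an Eulerian poset `Q`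
of rank `n + 1` by removing the maximal element and one element `q` of rank `n`. -/
def IsNearEulerianOfRank (α : Type) [PartialOrder α] [Finite α] (n : ℕ) : Prop :=
  ∃ (Q : Type) (_ : PartialOrder Q) (_ : Finite Q) (q top : Q),
    IsEulerianOfRank Q (n + 1) ∧ (∀ z, z ≤ top) ∧ rho q = n ∧ q ≠ top ∧
    Nonempty (α ≃o {x : Q // x ≠ q ∧ x ≠ top})

/-- `α` is (isomorphic to) the boundary of an Eulerian poset, where `α` has rank `n`
(so the Eulerian poset has rank `n + 1`). -/
def IsBoundaryOfEulerianOfRank (α : Type) [PartialOrder α] [Finite α] (n : ℕ) : Prop :=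
  ∃ (Q : Type) (_ : PartialOrder Q) (_ : Finite Q) (top : Q),
    IsEulerianOfRank Q (n + 1) ∧ (∀ z, z ≤ top) ∧
    Nonempty (α ≃o {x : Q // x ≠ top})

/-! ### Strong formal subdivisions -/

/-- A strong formal subdivision (of rank `0`, with the natural rank functions): an
order-preserving, rank-increasing, surjective map which is strongly surjective and
satisfies the alternating-sum condition on fibers. -/
def IsSFS {α β : Type} [PartialOrder α] [PartialOrder β] (φ : α → β) : Prop :=
  Monotone φ ∧ (∀ y, rho y ≤ rho (φ y)) ∧ Function.Surjective φ ∧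
  (∀ y x, φ y ≤ x → ∃ y', y ≤ y' ∧ φ y' = x ∧ rho y' = rho x) ∧
  (∀ y x, φ y ≤ x →
    (∑ᶠ y' ∈ {y' | φ y' = x ∧ y ≤ y'}, ((-1 : ℤ) ^ rho y')) = (-1) ^ rho x)

/-! ### The flag enumerator, the `ab`-index and the `cd`-index -/

variable (K : Type) [Field K] [CharZero K]

/-- The free noncommutative algebra `K⟨a, b⟩`. -/
abbrev FA := FreeAlgebra K (Fin 2)

/-- The letter `a`. -/
def la : FA K := FreeAlgebra.ι K 0

/-- The letter `b`. -/
def lb : FA K := FreeAlgebra.ι K 1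

/-- `c = a + b`. -/
def lc : FA K := la K + lb K

/-- `d = ab + ba`. -/
def ld : FA K := la K * lb K + lb K * la K

/-- The characteristic monomial `u_S = u_1 ⋯ u_n` of a set `S` of ranks, where
`u_i = b` if `i ∈ S` and `u_i = a` otherwise. -/
def uWord (n : ℕ) (S : Set ℕ) : FA K :=
  (List.ofFn fun i : Fin n => if (i : ℕ) + 1 ∈ S then lb K else la K).prod

/-- Chains of the subposet `S` which contain the element `b0` (intended: the minimal
element of `S`). -/
def chainsIn [PartialOrder α] (S : Set α) (b0 : α) : Set (Finset α) :=
  {C | (C : Set α) ⊆ S ∧ IsChain (· ≤ ·) (C : Set α) ∧ b0 ∈ C}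

/-- The flag enumerator `Υ` of the subposet `S` with minimal element `b0`, of rank `n`;
ranks are computed relative to `b0`. -/
def upsSet [PartialOrder α] (S : Set α) (b0 : α) (n : ℕ) : FA K :=
  ∑ᶠ C ∈ chainsIn S b0, uWord K n ((fun y => rho y - rho b0) '' (C : Set α))

/-- The substitution `a ↦ a - b`, `b ↦ b` turning the flag enumerator into the
`ab`-index. -/
def toAB : FA K →ₐ[K] FA K :=
  FreeAlgebra.lift K (fun i : Fin 2 => if i = 0 then la K - lb K else lb K)

/-- The `ab`-index `Ψ` of the subposet `S` with minimal element `b0`, of rank `n`: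
`Ψ(a,b) = Υ(a-b, b)`. -/
def psiS [PartialOrder α] (S : Set α) (b0 : α) (n : ℕ) : FA K :=
  toAB K (upsSet K S b0 n)

/-- The subalgebra `K⟨c, d⟩ ⊆ K⟨a, b⟩` generated by `c = a + b` and `d = ab + ba`. -/
def cdSub : Subalgebra K (FA K) := Algebra.adjoin K {lc K, ld K}

/-! ### The algebra `R^e_Ψ`, the subalgebra `R^e_Φ` and the mixed space `R_Ω` -/

open scoped TensorProduct

/-- The free algebra `K⟨a, b, e⟩` on the letters `a, b, e`. -/
abbrev FA3 := FreeAlgebra K (Fin 3)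

/-- The relations `e² = ea = eb = ae = be = 0`. -/
inductive ERel : FA3 K → FA3 K → Prop
  | ee : ERel (FreeAlgebra.ι K 2 * FreeAlgebra.ι K 2) 0
  | ea : ERel (FreeAlgebra.ι K 2 * FreeAlgebra.ι K 0) 0
  | eb : ERel (FreeAlgebra.ι K 2 * FreeAlgebra.ι K 1) 0
  | ae : ERel (FreeAlgebra.ι K 0 * FreeAlgebra.ι K 2) 0
  | be : ERel (FreeAlgebra.ι K 1 * FreeAlgebra.ι K 2) 0

/-- `R^e_Ψ = K⟨a, b, e⟩ / (e², ea, eb, ae, be)`. -/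
abbrev ReP := RingQuot (ERel K)

/-- The quotient map `K⟨a, b, e⟩ → R^e_Ψ`. -/
def mkRe : FA3 K →ₐ[K] ReP K := RingQuot.mkAlgHom K (ERel K)

/-- The letter `a` in `R^e_Ψ`. -/
def eA : ReP K := mkRe K (FreeAlgebra.ι K 0)

/-- The letter `b` in `R^e_Ψ`. -/
def eB : ReP K := mkRe K (FreeAlgebra.ι K 1)

/-- The letter `e` in `R^e_Ψ`. -/
def eE : ReP K := mkRe K (FreeAlgebra.ι K 2)

/-- `c = a + b` in `R^e_Ψ`. -/
def eC : ReP K := eA K + eB K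

/-- `d = ab + ba` in `R^e_Ψ`. -/
def eD : ReP K := eA K * eB K + eB K * eA K

/-- The subalgebra `R^e_Φ` of `R^e_Ψ`, with underlying space `K⟨c,d⟩ ⊕ Ke`. -/
def RePhi : Subalgebra K (ReP K) := Algebra.adjoin K {eC K, eD K, eE K}

/-- The element `e`, as an element of `R^e_Φ`. -/
def eESub : RePhi K := ⟨eE K, Algebra.subset_adjoin (by simp)⟩

/-- The image in `R^e_Ψ` of a word in the letters `a, b`. -/
def wordRe (l : List (Fin 2)) : ReP K :=
  mkRe K ((l.map fun i => FreeAlgebra.ι K (Fin.castSucc i)).prod)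

/-- The substitution `c' ↦ c, d' ↦ d` from `R'_Φ = K⟨c', d'⟩` (a free algebra on two
generators) into `K⟨a, b⟩`. -/
def cdToAB : FA K →ₐ[K] FA K :=
  FreeAlgebra.lift K (fun i : Fin 2 => if i = 0 then lc K else ld K)

/-- The substitution `c' ↦ c, d' ↦ d` from `R'_Φ = K⟨c', d'⟩` into `R^e_Ψ`. -/
def cdToRe : FA K →ₐ[K] ReP K :=
  FreeAlgebra.lift K (fun i : Fin 2 => if i = 0 then eC K else eD K)

/-- The inclusion `K⟨a, b⟩ → R^e_Ψ`, `a ↦ a`, `b ↦ b`. -/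
def abToRe : FA K →ₐ[K] ReP K :=
  FreeAlgebra.lift K (fun i : Fin 2 => if i = 0 then eA K else eB K)

/-- The mixed vector space `R_Ω = R'_Φ ⊗_K R^e_Φ`, where `R'_Φ = K⟨c', d'⟩`. -/
abbrev ROmega := (FA K) ⊗[K] (RePhi K)

/-- `L : B → K⟨c', d'⟩` is the family of primed local `cd`-indices `ℓ^Φ_{Γ_x}(c', d')` of
a strong formal subdivision `φ`: under `c' ↦ c, d' ↦ d` the polynomial `L x` becomes the
local `ab`-index `ℓ^Ψ_{Γ_x} = Ψ_{Γ_x} - Ψ_{∂Γ_x}·a`, where `Γ_x = φ⁻¹[0̂, x]` has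
boundary `∂Γ_x = φ⁻¹[0̂, x)`.  (`ℓ^Φ` of the one-element poset `Γ_{0̂}` is `1`.) -/
def IsLocalCdFamily [PartialOrder α] [OrderBot α] [PartialOrder β]
    (φ : α → β) (L : β → FA K) : Prop :=
  ∀ x : β, cdToAB K (L x) =
    psiS K (φ ⁻¹' Set.Iic x) ⊥ (rho x) - psiS K (φ ⁻¹' Set.Iio x) ⊥ (rho x - 1) * la K

/-- `P : B → B → R^e_Φ` is the family of `cd`-indices `Φ_{[y, x]}(c, d, e) ∈ R^e_Φ` of
the Eulerian intervals of `B`: for `y = x` (a one-element poset) it is `e`, and for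
`y < x` it is the `cd`-index `Φ_{∂[y,x]} = Ψ_{∂[y,x]}`, viewed inside `R^e_Ψ`. -/
def IsIntervalCdFamily [PartialOrder β] (P : β → β → RePhi K) : Prop :=
  ∀ y x : β,
    (y = x → P y x = eESub K) ∧
    (y < x → ((P y x : ReP K) =
      abToRe K (psiS K (Set.Ico y x) y (rho x - rho y - 1))))
/-- `sp2` is the linear specialization `R^e_Φ → K⟨a,b⟩` which is the identity on the
`cd`-part (i.e. sends a `cd`-polynomial in `R^e_Φ` to itself in `K⟨a,b⟩`) and sends `e`
to `1`. -/
def IsESpecialization (sp2 : RePhi K →ₗ[K] FA K) : Prop :=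
  sp2 (eESub K) = 1 ∧
  ∀ (z : RePhi K) (p : FA K), (z : ReP K) = cdToRe K p → sp2 z = cdToAB K p


/-! ### Auxiliary development -/

section AuxWords
set_option linter.unusedSectionVars false

variable (K : Type) [Field K] [CharZero K]

/-- `a - b`. -/
def amb : FA K := la K - lb K

/-- The `ab`-word with `b` at positions of `S` and `a - b` elsewhere. -/
def wv (m : ℕ) (S : Set ℕ) : FA K :=
  (List.ofFn fun i : Fin m => if (i : ℕ) + 1 ∈ S then lb K else amb K).prod

lemma toAB_la : toAB K (la K) = amb K := by
  simp [toAB, la, lb, amb, FreeAlgebra.lift_ι_apply]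

lemma toAB_lb : toAB K (lb K) = lb K := by
  simp [toAB, la, lb, FreeAlgebra.lift_ι_apply]

lemma toAB_uWord (m : ℕ) (S : Set ℕ) : toAB K (uWord K m S) = wv K m S := by
  unfold uWord wv
  rw [map_list_prod, List.map_ofFn]
  refine congrArg List.prod (congrArg List.ofFn (funext fun i => ?_))
  simp only [Function.comp_apply, apply_ite (toAB K), toAB_la, toAB_lb]

lemma wv_congr (m : ℕ) {S T : Set ℕ}
    (h : ∀ i, 1 ≤ i → i ≤ m → (i ∈ S ↔ i ∈ T)) : wv K m S = wv K m T := by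
  unfold wv
  refine congrArg List.prod (congrArg List.ofFn (funext fun i => ?_))
  have := h ((i : ℕ) + 1) (by omega) (by omega)
  by_cases hi : (i : ℕ) + 1 ∈ S
  · rw [if_pos hi, if_pos (this.mp hi)]
  · rw [if_neg hi, if_neg (fun hT => hi (this.mpr hT))]

lemma wv_add (m₁ m₂ : ℕ) (S : Set ℕ) :
    wv K (m₁ + m₂) S = wv K m₁ S * wv K m₂ {j | m₁ + j ∈ S} := by
  unfold wv
  rw [List.ofFn_add, List.prod_append]
  refine congrArg₂ (· * ·) (congrArg List.prod (congrArg List.ofFn (funext fun i => rfl)))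
    (congrArg List.prod (congrArg List.ofFn (funext fun j => ?_)))
  have : ((Fin.natAdd m₁ j : Fin (m₁ + m₂)) : ℕ) + 1 = m₁ + ((j : ℕ) + 1) := by
    simp [Fin.natAdd]; omega
  rw [this]
  rfl

lemma wv_const (m : ℕ) {S : Set ℕ} (h : ∀ i, 1 ≤ i → i ≤ m → i ∉ S) :
    wv K m S = amb K ^ m := by
  unfold wv
  have : (List.ofFn fun i : Fin m => if (i : ℕ) + 1 ∈ S then lb K else amb K)
      = List.replicate m (amb K) := by
    rw [← List.ofFn_const m (amb K)]
    refine congrArg List.ofFn (funext fun i => ?_)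
    rw [if_neg (h ((i : ℕ) + 1) (by omega) (by omega))]
  rw [this, List.prod_replicate]

lemma wv_zero (S : Set ℕ) : wv K 0 S = 1 := by
  unfold wv; simp

lemma wv_one (S : Set ℕ) : wv K 1 S = if 1 ∈ S then lb K else amb K := by
  unfold wv
  simp [List.ofFn_succ]

/-- Splitting off the top `b` of a word. -/
lemma wv_split (m ρ : ℕ) (hρ1 : 1 ≤ ρ) (hρm : ρ ≤ m) {S : Set ℕ}
    (hmem : ρ ∈ S) (habove : ∀ i, ρ < i → i ∉ S) :
    wv K m S = wv K (ρ - 1) S * lb K * amb K ^ (m - ρ) := by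
  obtain ⟨s, t, rfl, rfl⟩ : ∃ s t, ρ = s + 1 ∧ m = s + 1 + t :=
    ⟨ρ - 1, m - ρ, by omega, by omega⟩
  have e1 : s + 1 - 1 = s := by omega
  have e2 : s + 1 + t - (s + 1) = t := by omega
  rw [e1, e2, wv_add K (s + 1) t, wv_add K s 1]
  have h4 : wv K 1 {j | s + j ∈ S} = lb K := by
    rw [wv_one, if_pos]; exact hmem
  have h2 : wv K t {j | s + 1 + j ∈ S} = amb K ^ t := by
    apply wv_const
    intro i h1i _ hiS
    exact habove (s + 1 + i) (by omega) hiS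
  rw [h4, h2]

lemma amb_mul_amb_pow (s t : ℕ) :
    amb K ^ s * amb K * amb K ^ t = amb K ^ (s + 1 + t) := by
  rw [pow_add, pow_add, pow_one, mul_assoc]

end AuxWords


section AuxRho
set_option linter.unusedSectionVars false

variable {γ : Type} [PartialOrder γ] [Finite γ]

/-- The defining set of `rho`. -/
def rhoSet (x : γ) : Set ℕ :=
  {k : ℕ | ∃ s : Finset γ,
    IsChain (· ≤ ·) (s : Set γ) ∧ (s : Set γ) ⊆ Set.Iic x ∧ s.card = k + 1}

lemma isChain_singleton' (x : γ) : IsChain (· ≤ ·) ({x} : Set γ) := by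
  intro a ha b hb hne
  simp only [Set.mem_singleton_iff] at ha hb
  exact absurd (ha.trans hb.symm) hne

lemma rho_eq_sSup (x : γ) : rho x = sSup (rhoSet x) := rfl

lemma rhoSet_nonempty (x : γ) : (rhoSet x).Nonempty := by
  refine ⟨0, {x}, ?_, ?_, by simp⟩
  · simp only [Finset.coe_singleton]
    exact isChain_singleton' x
  · simp

lemma rhoSet_bddAbove (x : γ) : BddAbove (rhoSet x) := by
  haveI := Fintype.ofFinite γ
  refine ⟨Fintype.card γ, fun k hk => ?_⟩
  obtain ⟨s, _, _, hcard⟩ := hk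
  have := Finset.card_le_univ s
  omega

lemma exists_rho_chain (x : γ) : ∃ s : Finset γ,
    IsChain (· ≤ ·) (s : Set γ) ∧ (s : Set γ) ⊆ Set.Iic x ∧ s.card = rho x + 1 := by
  have := Nat.sSup_mem (rhoSet_nonempty x) (rhoSet_bddAbove x)
  exact this

lemma chain_card_le_rho {x : γ} {s : Finset γ} (hc : IsChain (· ≤ ·) (s : Set γ))
    (hs : (s : Set γ) ⊆ Set.Iic x) : s.card ≤ rho x + 1 := by
  rcases Nat.eq_zero_or_pos s.card with h | h
  · omega
  · have hk : s.card - 1 ∈ rhoSet x := ⟨s, hc, hs, by omega⟩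
    have := le_csSup (rhoSet_bddAbove x) hk
    rw [rho_eq_sSup]
    omega

lemma rho_lt_rho {u v : γ} (h : u < v) : rho u < rho v := by
  obtain ⟨s, hc, hs, hcard⟩ := exists_rho_chain u
  have hvs : v ∉ s := by
    intro hv
    have hvu : v ≤ u := hs (Finset.mem_coe.mpr hv)
    exact h.not_ge hvu
  have hc' : IsChain (· ≤ ·) ((insert v s : Finset γ) : Set γ) := by
    rw [Finset.coe_insert]
    exact hc.insert (fun b hb _ => Or.inr ((hs hb).trans h.le))
  have hs' : ((insert v s : Finset γ) : Set γ) ⊆ Set.Iic v := by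
    rw [Finset.coe_insert]
    exact Set.insert_subset (le_refl v) (fun z hz => ((hs hz).trans h.le))
  have := chain_card_le_rho hc' hs'
  rw [Finset.card_insert_of_notMem hvs] at this
  omega

lemma rho_mono {u v : γ} (h : u ≤ v) : rho u ≤ rho v := by
  rcases eq_or_lt_of_le h with rfl | h
  · exact le_refl _
  · exact (rho_lt_rho h).le

lemma rho_bot [OrderBot γ] : rho (⊥ : γ) = 0 := by
  rw [rho_eq_sSup]
  apply Nat.le_antisymm _ (Nat.zero_le _)
  apply csSup_le (rhoSet_nonempty ⊥)
  rintro k ⟨s, _, hs, hcard⟩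
  have : s ⊆ {⊥} := fun z hz => by
    simpa using le_antisymm (by simpa using hs hz) bot_le
  have := Finset.card_le_card this
  simp only [Finset.card_singleton] at this
  omega

lemma exists_maximal_superchain (s : Finset γ) (hs : IsChain (· ≤ ·) (s : Set γ)) :
    ∃ t : Finset γ, s ⊆ t ∧ IsChain (· ≤ ·) (t : Set γ) ∧
      (∀ t' : Finset γ, IsChain (· ≤ ·) (t' : Set γ) → t ⊆ t' → t = t') := by
  haveI := Fintype.ofFinite γ
  have hfin : {c : Finset γ | IsChain (· ≤ ·) (c : Set γ) ∧ s ⊆ c}.Finite :=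
    Set.toFinite _
  obtain ⟨t, ⟨htc, hst⟩, hmax⟩ := hfin.exists_maximalFor Finset.card _ ⟨s, hs, subset_refl s⟩
  refine ⟨t, hst, htc, fun t' ht'c htt' => ?_⟩
  have := hmax (j := t') ⟨ht'c, hst.trans htt'⟩ (Finset.card_le_card htt')
  exact Finset.eq_of_subset_of_card_le htt' this

variable {n : ℕ}

lemma chain_card_le_graded (hG : IsGradedOfRank γ n) {s : Finset γ}
    (hc : IsChain (· ≤ ·) (s : Set γ)) : s.card ≤ n + 1 := by
  obtain ⟨t, hst, htc, hmax⟩ := exists_maximal_superchain s hc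
  have := hG t (Set.subset_univ _) htc (fun t' _ h1 h2 => hmax t' h1 h2)
  have := Finset.card_le_card hst
  omega

lemma rho_le_graded (hG : IsGradedOfRank γ n) (x : γ) : rho x ≤ n := by
  obtain ⟨s, hc, _, hcard⟩ := exists_rho_chain x
  have := chain_card_le_graded hG hc
  omega

lemma rho_top_graded [OrderTop γ] (hG : IsGradedOfRank γ n) : rho (⊤ : γ) = n := by
  refine le_antisymm (rho_le_graded hG _) ?_
  obtain ⟨t, _, htc, hmax⟩ := exists_maximal_superchain ({⊤} : Finset γ)
    (by simp only [Finset.coe_singleton]; exact isChain_singleton' ⊤)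
  have hcard := hG t (Set.subset_univ _) htc (fun t' _ h1 h2 => hmax t' h1 h2)
  have := chain_card_le_rho htc (fun z _ => le_top)
  omega

lemma rho_lt_graded_of_ne_top [OrderTop γ] (hG : IsGradedOfRank γ n) {x : γ}
    (hx : x ≠ ⊤) : rho x < n := by
  rw [← rho_top_graded hG]
  exact rho_lt_rho (lt_top_iff_ne_top.mpr hx)

lemma eq_top_of_rho_le [OrderTop γ] (hG : IsGradedOfRank γ n) {x : γ}
    (hx : n ≤ rho x) : x = ⊤ := by
  by_contra h
  exact absurd hx (not_le.mpr (rho_lt_graded_of_ne_top hG h))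

lemma rho_coatom [OrderTop γ] (hG : IsGradedOfRank γ n) {w : γ} (h : w ⋖ (⊤ : γ)) :
    rho w = n - 1 ∧ 1 ≤ n := by
  have hw : w ≠ ⊤ := h.lt.ne
  have hlt : rho w < n := rho_lt_graded_of_ne_top hG hw
  obtain ⟨t, hsub, htc, hmax⟩ := exists_maximal_superchain ({w, ⊤} : Finset γ)
    (by
      rw [Finset.coe_insert, Finset.coe_singleton]
      exact (isChain_singleton' ⊤).insert (fun b hb _ => by
        simp only [Set.mem_singleton_iff] at hb; subst hb; exact Or.inl le_top))
  have hcard := hG t (Set.subset_univ _) htc (fun t' _ h1 h2 => hmax t' h1 h2)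
  have hwt : w ∈ t := hsub (by simp)
  have htop : (⊤ : γ) ∈ t := hsub (by simp)
  have herase : ((t.erase ⊤ : Finset γ) : Set γ) ⊆ Set.Iic w := by
    intro z hz
    simp only [Finset.coe_erase, Set.mem_diff, Finset.mem_coe,
      Set.mem_singleton_iff] at hz
    obtain ⟨hzt, hzne⟩ := hz
    rcases eq_or_ne z w with rfl | hzw
    · exact le_refl _
    · rcases htc hzt hwt (by exact_mod_cast hzw) with h1 | h1
      · exact h1
      · exfalso
        exact h.2 (lt_of_le_of_ne h1 (Ne.symm hzw)) (lt_top_iff_ne_top.mpr hzne)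
  have hec : IsChain (· ≤ ·) ((t.erase ⊤ : Finset γ) : Set γ) := by
    refine IsChain.mono ?_ htc
    intro z hz
    simp only [Finset.coe_erase, Set.mem_diff, Finset.mem_coe] at hz ⊢
    exact hz.1
  have := chain_card_le_rho hec herase
  rw [Finset.card_erase_of_mem htop] at this
  constructor <;> omega

lemma rho_cover_top {x z : γ} (hG : IsGradedOfRank γ n) (hn : 1 ≤ n)
    (hx : rho x = n - 1) (hz : x < z) : rho z = n ∧ x ⋖ z := by
  have h1 : rho z ≤ n := rho_le_graded hG z
  have h2 : rho x < rho z := rho_lt_rho hz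
  have hzn : rho z = n := by omega
  refine ⟨hzn, hz, fun c hc1 hc2 => ?_⟩
  have := rho_lt_rho hc1
  have := rho_lt_rho hc2
  omega

end AuxRho


section AuxPsi
set_option linter.unusedSectionVars false

variable (K : Type) [Field K] [CharZero K]
variable {γ : Type} [PartialOrder γ] [Finite γ]

lemma chainsIn_finite (S : Set γ) (b0 : γ) : (chainsIn S b0).Finite := by
  haveI := Fintype.ofFinite γ
  exact Set.toFinite _

lemma psiS_eq_sum (S : Set γ) (b0 : γ) (m : ℕ) :
    psiS K S b0 m = ∑ C ∈ (chainsIn_finite S b0).toFinset,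
      wv K m ((fun y => rho y - rho b0) '' (C : Set γ)) := by
  unfold psiS upsSet
  rw [finsum_mem_eq_finite_toFinset_sum _ (chainsIn_finite S b0), map_sum]
  exact Finset.sum_congr rfl (fun C _ => toAB_uWord K m _)

lemma psiS_empty (b0 : γ) (m : ℕ) : psiS K (∅ : Set γ) b0 m = 0 := by
  rw [psiS_eq_sum]
  apply Finset.sum_eq_zero
  intro C hC
  rw [Set.Finite.mem_toFinset] at hC
  exact absurd (hC.1 (Finset.mem_coe.mpr hC.2.2)) (Set.notMem_empty b0)

lemma exists_greatest_of_chain {C : Finset γ} (hne : C.Nonempty)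
    (hc : IsChain (· ≤ ·) (C : Set γ)) : ∃ y ∈ C, ∀ z ∈ C, z ≤ y := by
  obtain ⟨y, hy, hmax⟩ := Finset.exists_maximal hne
  refine ⟨y, hy, fun z hz => ?_⟩
  rcases eq_or_ne z y with rfl | hne'
  · exact le_refl _
  · rcases hc (Finset.mem_coe.mpr hy) (Finset.mem_coe.mpr hz) (Ne.symm hne') with h | h
    · exact absurd (le_antisymm (hmax hz h) h) hne'
    · exact h

/-- The key decomposition of the `ab`-index of a (relative) lower set by the
greatest element of each chain. -/
lemma psiS_top_decomp {S : Set γ} {b0 : γ} (hb0 : b0 ∈ S) (hIci : S ⊆ Set.Ici b0)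
    (hlow : ∀ y ∈ S, Set.Icc b0 y ⊆ S) {m : ℕ} (hm : ∀ y ∈ S, rho y - rho b0 ≤ m) :
    psiS K S b0 m = ∑ y ∈ (Set.toFinite S).toFinset,
      (if y = b0 then 1 else psiS K (Set.Ico b0 y) b0 (rho y - rho b0 - 1) * lb K)
        * amb K ^ (m - (rho y - rho b0)) := by
  classical
  haveI := Fintype.ofFinite γ
  set rel : γ → ℕ := fun y => rho y - rho b0 with hrel
  set A := (chainsIn_finite S b0).toFinset with hA
  set T := (Set.toFinite S).toFinset with hT
  have hmemA : ∀ C, C ∈ A ↔ ((C : Set γ) ⊆ S ∧ IsChain (· ≤ ·) (C : Set γ) ∧ b0 ∈ C) := by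
    intro C
    rw [hA, Set.Finite.mem_toFinset]
    exact Iff.rfl
  rw [psiS_eq_sum]
  -- step 1: insert the sum over possible greatest elements
  have step1 : ∀ C ∈ A, wv K m (rel '' (C : Set γ))
      = ∑ y ∈ T, if (y ∈ C ∧ ∀ z ∈ C, z ≤ y) then wv K m (rel '' (C : Set γ)) else 0 := by
    intro C hC
    rw [hmemA] at hC
    obtain ⟨hCS, hCc, hCb0⟩ := hC
    obtain ⟨y0, hy0C, hy0⟩ := exists_greatest_of_chain ⟨b0, hCb0⟩ hCc
    have hcond : ∀ y, (y ∈ C ∧ ∀ z ∈ C, z ≤ y) ↔ y = y0 := by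
      intro y
      constructor
      · rintro ⟨hyC, hy⟩
        exact le_antisymm (hy0 y hyC) (hy y0 hy0C)
      · rintro rfl
        exact ⟨hy0C, hy0⟩
    have : ∀ y ∈ T, (if (y ∈ C ∧ ∀ z ∈ C, z ≤ y) then wv K m (rel '' (C : Set γ)) else 0)
        = (if y = y0 then wv K m (rel '' (C : Set γ)) else 0) := by
      intro y _
      by_cases h : y = y0
      · rw [if_pos ((hcond y).mpr h), if_pos h]
      · rw [if_neg (fun hc => h ((hcond y).mp hc)), if_neg h]
    rw [Finset.sum_congr rfl this, Finset.sum_ite_eq' T y0, if_pos]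
    rw [hT, Set.Finite.mem_toFinset]
    exact hCS (Finset.mem_coe.mpr hy0C)
  rw [Finset.sum_congr rfl step1, Finset.sum_comm]
  apply Finset.sum_congr rfl
  intro y hyT
  have hyS : y ∈ S := by rwa [hT, Set.Finite.mem_toFinset] at hyT
  rw [← Finset.sum_filter]
  by_cases hyb : y = b0
  · -- greatest element b0 : the only chain is {b0}
    subst hyb
    have hfilter : A.filter (fun C => y ∈ C ∧ ∀ z ∈ C, z ≤ y) = {({y} : Finset γ)} := by
      apply Finset.ext
      intro C
      simp only [Finset.mem_filter, Finset.mem_singleton]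
      constructor
      · rintro ⟨hCA, hyC, hge⟩
        rw [hmemA] at hCA
        apply Finset.ext
        intro z
        simp only [Finset.mem_singleton]
        constructor
        · intro hz
          exact le_antisymm (hge z hz) (hIci (hCA.1 (Finset.mem_coe.mpr hz)))
        · rintro rfl; exact hyC
      · rintro rfl
        refine ⟨?_, Finset.mem_singleton_self y, fun z hz => ?_⟩
        · rw [hmemA]
          refine ⟨?_, ?_, Finset.mem_singleton_self y⟩
          · intro z hz
            simp only [Finset.coe_singleton, Set.mem_singleton_iff] at hz
            subst hz; exact hb0
          · simp only [Finset.coe_singleton]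
            exact isChain_singleton' y
        · rw [Finset.mem_singleton] at hz; subst hz; exact le_refl _
    rw [hfilter, Finset.sum_singleton, if_pos rfl, one_mul]
    have hmm : m - (rho y - rho y) = m := by omega
    rw [hmm]
    apply wv_const
    intro i hi1 _ hiS
    simp only [Finset.coe_singleton, Set.image_singleton, Set.mem_singleton_iff,
      hrel] at hiS
    omega
  · -- greatest element y > b0 : bijection with chains of [b0, y)
    have hb0y : b0 < y := lt_of_le_of_ne (hIci hyS) (Ne.symm hyb)
    have hrely : 1 ≤ rel y := by
      have := rho_lt_rho hb0y
      simp only [hrel]; omega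
    have hrelm : rel y ≤ m := hm y hyS
    rw [if_neg hyb, psiS_eq_sum]
    rw [Finset.sum_mul, Finset.sum_mul]
    apply Finset.sum_nbij' (fun C => C.erase y) (fun D => insert y D)
    · -- maps to
      intro C hC
      rw [Finset.mem_filter, hmemA] at hC
      obtain ⟨⟨hCS, hCc, hCb0⟩, hyC, hge⟩ := hC
      rw [Set.Finite.mem_toFinset]
      refine ⟨?_, ?_, Finset.mem_erase.mpr ⟨Ne.symm hyb, hCb0⟩⟩
      · intro z hz
        simp only [Finset.coe_erase, Set.mem_diff, Finset.mem_coe,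
          Set.mem_singleton_iff] at hz
        exact ⟨hIci (hCS (Finset.mem_coe.mpr hz.1)),
          lt_of_le_of_ne (hge z hz.1) hz.2⟩
      · refine IsChain.mono ?_ hCc
        intro z hz
        simp only [Finset.coe_erase, Set.mem_diff, Finset.mem_coe] at hz
        exact Finset.mem_coe.mpr hz.1
    · -- maps from
      intro D hD
      rw [Set.Finite.mem_toFinset] at hD
      obtain ⟨hDS, hDc, hDb0⟩ := hD
      have hyD : y ∉ D := fun h => absurd (hDS (Finset.mem_coe.mpr h)).2 (lt_irrefl y)
      rw [Finset.mem_filter, hmemA]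
      refine ⟨⟨?_, ?_, Finset.mem_insert_of_mem hDb0⟩, Finset.mem_insert_self y D,
        fun z hz => ?_⟩
      · intro z hz
        simp only [Finset.coe_insert, Set.mem_insert_iff] at hz
        rcases hz with rfl | hz
        · exact hyS
        · exact hlow y hyS ⟨(hDS hz).1, (hDS hz).2.le⟩
      · rw [Finset.coe_insert]
        exact hDc.insert (fun b hb _ => Or.inr (hDS hb).2.le)
      · rcases Finset.mem_insert.mp hz with rfl | hz
        · exact le_refl _
        · exact (hDS (Finset.mem_coe.mpr hz)).2.le
    · -- left inverse
      intro C hC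
      rw [Finset.mem_filter] at hC
      exact Finset.insert_erase hC.2.1
    · -- right inverse
      intro D hD
      rw [Set.Finite.mem_toFinset] at hD
      have hyD : y ∉ D := fun h => absurd (hD.1 (Finset.mem_coe.mpr h)).2 (lt_irrefl y)
      exact Finset.erase_insert hyD
    · -- words agree
      intro C hC
      rw [Finset.mem_filter, hmemA] at hC
      obtain ⟨⟨hCS, hCc, hCb0⟩, hyC, hge⟩ := hC
      have hrelmem : rel y ∈ rel '' (C : Set γ) := ⟨y, Finset.mem_coe.mpr hyC, rfl⟩
      have habove : ∀ i, rel y < i → i ∉ rel '' (C : Set γ) := by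
        rintro i hi ⟨z, hzC, rfl⟩
        have : rho z ≤ rho y := rho_mono (hge z (Finset.mem_coe.mp hzC))
        simp only [hrel] at hi
        omega
      rw [wv_split K m (rel y) hrely hrelm hrelmem habove]
      congr 1
      congr 1
      apply wv_congr
      intro i hi1 hi2
      constructor
      · rintro ⟨z, hzC, rfl⟩
        refine ⟨z, ?_, rfl⟩
        simp only [Finset.coe_erase, Set.mem_diff, Set.mem_singleton_iff]
        refine ⟨hzC, fun hzy => ?_⟩
        subst hzy
        omega
      · rintro ⟨z, hzD, rfl⟩
        simp only [Finset.coe_erase, Set.mem_diff] at hzD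
        exact ⟨z, hzD.1, rfl⟩

end AuxPsi


section AuxMain
set_option linter.unusedSectionVars false

variable (K : Type) [Field K] [CharZero K]
variable {α β : Type} [PartialOrder α] [Finite α] [OrderBot α]
  [PartialOrder β] [Finite β] [OrderBot β] [OrderTop β]

/-- The local `ab`-index of the subdivision restricted over `[0̂, x]`. -/
def ellF (φ : α → β) (x : β) : FA K :=
  psiS K (φ ⁻¹' Set.Iic x) ⊥ (rho x) - psiS K (φ ⁻¹' Set.Iio x) ⊥ (rho x - 1) * la K

/-- The `ab`-index of the half-open interval `[z, x)`. -/
def HF (z x : β) : FA K := psiS K (Set.Ico z x) z (rho x - rho z - 1)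

/-- The enumerator of chains from `⊥` to a fixed top `y`. -/
def kF (y : α) : FA K :=
  if y = (⊥ : α) then 1 else psiS K (Set.Iio y) ⊥ (rho y - 1) * lb K

variable {φ : α → β}

lemma phi_bot (hmono : Monotone φ) (hsurj : Function.Surjective φ) : φ ⊥ = ⊥ := by
  obtain ⟨y, hy⟩ := hsurj ⊥
  exact le_antisymm (hy ▸ hmono bot_le) bot_le

lemma expandG (hmono : Monotone φ) (hrk : ∀ y, rho y ≤ rho (φ y)) (hbot : φ ⊥ = ⊥)
    (x : β) :
    psiS K (φ ⁻¹' Set.Iic x) ⊥ (rho x)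
      = ∑ y ∈ (Set.toFinite (φ ⁻¹' Set.Iic x)).toFinset,
          kF K y * amb K ^ (rho x - rho y) := by
  have hb0 : (⊥ : α) ∈ φ ⁻¹' Set.Iic x := by
    simp only [Set.mem_preimage, Set.mem_Iic, hbot]
    exact bot_le
  rw [psiS_top_decomp K hb0 (fun y _ => bot_le)
    (fun y hy z hz => le_trans (hmono hz.2) hy)
    (fun y hy => by
      have h1 : rho y ≤ rho (φ y) := hrk y
      have h2 : rho (φ y) ≤ rho x := rho_mono hy
      omega)]
  apply Finset.sum_congr rfl
  intro y _
  rw [rho_bot, Nat.sub_zero, Set.Ico_bot]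
  rfl

lemma expandG' (hmono : Monotone φ) (hrk : ∀ y, rho y ≤ rho (φ y)) (hbot : φ ⊥ = ⊥)
    (x : β) :
    psiS K (φ ⁻¹' Set.Iio x) ⊥ (rho x - 1)
      = ∑ y ∈ (Set.toFinite (φ ⁻¹' Set.Iio x)).toFinset,
          kF K y * amb K ^ (rho x - 1 - rho y) := by
  rcases eq_or_ne x ⊥ with rfl | hx
  · have hset : φ ⁻¹' Set.Iio (⊥ : β) = (∅ : Set α) := by
      rw [Set.Iio_bot, Set.preimage_empty]
    rw [Set.Finite.toFinset_eq_empty.mpr hset, Finset.sum_empty, hset, psiS_empty]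
  · have hb0 : (⊥ : α) ∈ φ ⁻¹' Set.Iio x := by
      simp only [Set.mem_preimage, Set.mem_Iio, hbot]
      exact bot_lt_iff_ne_bot.mpr hx
    rw [psiS_top_decomp K hb0 (fun y _ => bot_le)
      (fun y hy z hz => lt_of_le_of_lt (hmono hz.2) hy)
      (fun y hy => by
        have h1 : rho y ≤ rho (φ y) := hrk y
        have h2 : rho (φ y) < rho x := rho_lt_rho hy
        omega)]
    apply Finset.sum_congr rfl
    intro y _
    rw [rho_bot, Nat.sub_zero, Set.Ico_bot]
    rfl

lemma expandH {z x : β} (hzx : z < x) :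
    HF K z x = amb K ^ (rho x - rho z - 1)
      + ∑ u ∈ (Set.toFinite (Set.Ioo z x)).toFinset,
          HF K z u * lb K * amb K ^ (rho x - rho u - 1) := by
  have hb0 : z ∈ Set.Ico z x := ⟨le_refl z, hzx⟩
  have hdec := psiS_top_decomp K (S := Set.Ico z x) (b0 := z) hb0
    (fun y hy => hy.1)
    (fun y hy w hw => ⟨hw.1, lt_of_le_of_lt hw.2 hy.2⟩)
    (m := rho x - rho z - 1)
    (fun y hy => by
      have h1 : rho z ≤ rho y := rho_mono hy.1
      have h2 : rho y < rho x := rho_lt_rho hy.2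
      omega)
  rw [HF, hdec]
  have hzmem : z ∈ (Set.toFinite (Set.Ico z x)).toFinset := by
    rw [Set.Finite.mem_toFinset]; exact hb0
  rw [← Finset.add_sum_erase _ _ hzmem, if_pos rfl, one_mul, Nat.sub_self, Nat.sub_zero]
  congr 1
  have hers : ((Set.toFinite (Set.Ico z x)).toFinset).erase z
      = (Set.toFinite (Set.Ioo z x)).toFinset := by
    apply Finset.ext
    intro u
    simp only [Finset.mem_erase, Set.Finite.mem_toFinset, Set.mem_Ico, Set.mem_Ioo]
    constructor
    · rintro ⟨hne, hzu, hux⟩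
      exact ⟨lt_of_le_of_ne hzu (Ne.symm hne), hux⟩
    · rintro ⟨hzu, hux⟩
      exact ⟨(ne_of_gt hzu), hzu.le, hux⟩
  rw [hers]
  apply Finset.sum_congr rfl
  intro u hu
  rw [Set.Finite.mem_toFinset, Set.mem_Ioo] at hu
  have h1 : rho z < rho u := rho_lt_rho hu.1
  have h2 : rho u < rho x := rho_lt_rho hu.2
  rw [if_neg (ne_of_gt hu.1)]
  have he : rho x - rho z - 1 - (rho u - rho z) = rho x - rho u - 1 := by omega
  rw [he]
  rfl

end AuxMain


section AuxBmain
set_option linter.unusedSectionVars false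
set_option maxHeartbeats 1000000

variable (K : Type) [Field K] [CharZero K]
variable {α β : Type} [PartialOrder α] [Finite α] [OrderBot α]
  [PartialOrder β] [Finite β] [OrderBot β] [OrderTop β]
variable {φ : α → β}

/-- The decomposition theorem at the `ab`-index level. -/
lemma Bmain (hmono : Monotone φ) (hrk : ∀ y, rho y ≤ rho (φ y)) (hbot : φ ⊥ = ⊥)
    (x : β) :
    ∑ z ∈ (Set.toFinite (Set.Iio x)).toFinset, ellF K φ z * HF K z x
      = psiS K (φ ⁻¹' Set.Iio x) ⊥ (rho x - 1) := by
  haveI : WellFoundedLT β := Finite.to_wellFoundedLT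
  induction x using WellFoundedLT.induction with
  | _ x IH =>
  classical
  set A := (Set.toFinite (Set.Iio x)).toFinset with hAdef
  have hmemA : ∀ z, z ∈ A ↔ z < x := by
    intro z
    rw [hAdef, Set.Finite.mem_toFinset, Set.mem_Iio]
  have step12 : ∑ z ∈ A, ellF K φ z * HF K z x
      = (∑ z ∈ A, ellF K φ z * amb K ^ (rho x - rho z - 1))
        + ∑ z ∈ A, ∑ u ∈ (Set.toFinite (Set.Ioo z x)).toFinset,
            (ellF K φ z * HF K z u) * (lb K * amb K ^ (rho x - rho u - 1)) := by
    rw [← Finset.sum_add_distrib]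
    apply Finset.sum_congr rfl
    intro z hz
    rw [hmemA] at hz
    rw [expandH K hz, mul_add, Finset.mul_sum]
    congr 1
    apply Finset.sum_congr rfl
    intro u _
    simp only [mul_assoc]
  have e1 : ∀ z : β, (Set.toFinite (Set.Ioo z x)).toFinset
      = A.filter (fun u => z < u) := by
    intro z
    apply Finset.ext
    intro u
    simp only [Set.Finite.mem_toFinset, Set.mem_Ioo, Finset.mem_filter, hAdef,
      Set.mem_Iio]
    tauto
  have e2 : ∀ u, u < x → (Set.toFinite (Set.Iio u)).toFinset
      = A.filter (fun z => z < u) := by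
    intro u hu
    apply Finset.ext
    intro z
    simp only [Set.Finite.mem_toFinset, Set.mem_Iio, Finset.mem_filter, hAdef]
    constructor
    · intro h
      exact ⟨h.trans hu, h⟩
    · tauto
  have step3 : ∑ z ∈ A, ∑ u ∈ (Set.toFinite (Set.Ioo z x)).toFinset,
        (ellF K φ z * HF K z u) * (lb K * amb K ^ (rho x - rho u - 1))
      = ∑ u ∈ A, ∑ z ∈ (Set.toFinite (Set.Iio u)).toFinset,
          (ellF K φ z * HF K z u) * (lb K * amb K ^ (rho x - rho u - 1)) := by
    calc ∑ z ∈ A, ∑ u ∈ (Set.toFinite (Set.Ioo z x)).toFinset,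
          (ellF K φ z * HF K z u) * (lb K * amb K ^ (rho x - rho u - 1))
        = ∑ z ∈ A, ∑ u ∈ A, if z < u then
            (ellF K φ z * HF K z u) * (lb K * amb K ^ (rho x - rho u - 1)) else 0 := by
          apply Finset.sum_congr rfl
          intro z _
          rw [e1 z, Finset.sum_filter]
      _ = ∑ u ∈ A, ∑ z ∈ A, if z < u then
            (ellF K φ z * HF K z u) * (lb K * amb K ^ (rho x - rho u - 1)) else 0 :=
          Finset.sum_comm
      _ = ∑ u ∈ A, ∑ z ∈ (Set.toFinite (Set.Iio u)).toFinset,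
          (ellF K φ z * HF K z u) * (lb K * amb K ^ (rho x - rho u - 1)) := by
          apply Finset.sum_congr rfl
          intro u hu
          rw [hmemA] at hu
          rw [e2 u hu, Finset.sum_filter]
  have step4 : ∀ u ∈ A,
      ∑ z ∈ (Set.toFinite (Set.Iio u)).toFinset,
          (ellF K φ z * HF K z u) * (lb K * amb K ^ (rho x - rho u - 1))
        = psiS K (φ ⁻¹' Set.Iio u) ⊥ (rho u - 1)
            * (lb K * amb K ^ (rho x - rho u - 1)) := by
    intro u hu
    rw [hmemA] at hu
    rw [← Finset.sum_mul, IH u hu]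
  have step5 : (∑ z ∈ A, ellF K φ z * amb K ^ (rho x - rho z - 1))
      + ∑ u ∈ A, psiS K (φ ⁻¹' Set.Iio u) ⊥ (rho u - 1)
          * (lb K * amb K ^ (rho x - rho u - 1))
    = ∑ z ∈ A, (psiS K (φ ⁻¹' Set.Iic z) ⊥ (rho z) * amb K ^ (rho x - rho z - 1)
        - psiS K (φ ⁻¹' Set.Iio z) ⊥ (rho z - 1) * amb K ^ (rho x - rho z)) := by
    rw [← Finset.sum_add_distrib]
    apply Finset.sum_congr rfl
    intro z hz
    rw [hmemA] at hz
    have hrz : rho z < rho x := rho_lt_rho hz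
    have hpow : amb K ^ (rho x - rho z) = amb K * amb K ^ (rho x - rho z - 1) := by
      have h1 : rho x - rho z = (rho x - rho z - 1) + 1 := by omega
      conv_lhs => rw [h1]
      rw [pow_succ']
    rw [hpow]
    set P := amb K ^ (rho x - rho z - 1) with hP
    have hamb : amb K = la K - lb K := rfl
    rw [hamb]
    simp only [ellF]
    noncomm_ring
  have step6 : ∀ z ∈ A,
      psiS K (φ ⁻¹' Set.Iic z) ⊥ (rho z) * amb K ^ (rho x - rho z - 1)
        - psiS K (φ ⁻¹' Set.Iio z) ⊥ (rho z - 1) * amb K ^ (rho x - rho z)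
      = ∑ y ∈ (Set.toFinite {y : α | φ y = z}).toFinset,
          kF K y * amb K ^ (rho x - 1 - rho y) := by
    intro z hz
    rw [hmemA] at hz
    have hrz : rho z < rho x := rho_lt_rho hz
    rw [expandG K hmono hrk hbot z, expandG' K hmono hrk hbot z,
        Finset.sum_mul, Finset.sum_mul]
    have hG : ∑ y ∈ (Set.toFinite (φ ⁻¹' Set.Iic z)).toFinset,
        kF K y * amb K ^ (rho z - rho y) * amb K ^ (rho x - rho z - 1)
        = ∑ y ∈ (Set.toFinite (φ ⁻¹' Set.Iic z)).toFinset,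
            kF K y * amb K ^ (rho x - 1 - rho y) := by
      apply Finset.sum_congr rfl
      intro y hy
      rw [Set.Finite.mem_toFinset, Set.mem_preimage, Set.mem_Iic] at hy
      have h1 : rho y ≤ rho (φ y) := hrk y
      have h2 : rho (φ y) ≤ rho z := rho_mono hy
      rw [mul_assoc, ← pow_add]
      congr 2
      omega
    have hG' : ∑ y ∈ (Set.toFinite (φ ⁻¹' Set.Iio z)).toFinset,
        kF K y * amb K ^ (rho z - 1 - rho y) * amb K ^ (rho x - rho z)
        = ∑ y ∈ (Set.toFinite (φ ⁻¹' Set.Iio z)).toFinset,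
            kF K y * amb K ^ (rho x - 1 - rho y) := by
      apply Finset.sum_congr rfl
      intro y hy
      rw [Set.Finite.mem_toFinset, Set.mem_preimage, Set.mem_Iio] at hy
      have h1 : rho y ≤ rho (φ y) := hrk y
      have h2 : rho (φ y) < rho z := rho_lt_rho hy
      rw [mul_assoc, ← pow_add]
      congr 2
      omega
    rw [hG, hG']
    have hsub : (Set.toFinite (φ ⁻¹' Set.Iio z)).toFinset
        ⊆ (Set.toFinite (φ ⁻¹' Set.Iic z)).toFinset := by
      intro y hy
      rw [Set.Finite.mem_toFinset, Set.mem_preimage, Set.mem_Iio] at hy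
      rw [Set.Finite.mem_toFinset, Set.mem_preimage, Set.mem_Iic]
      exact hy.le
    have hsdiff := Finset.sum_sdiff (f := fun y => kF K y * amb K ^ (rho x - 1 - rho y))
      hsub
    have hfib : (Set.toFinite (φ ⁻¹' Set.Iic z)).toFinset
        \ (Set.toFinite (φ ⁻¹' Set.Iio z)).toFinset
        = (Set.toFinite {y : α | φ y = z}).toFinset := by
      apply Finset.ext
      intro y
      simp only [Finset.mem_sdiff, Set.Finite.mem_toFinset, Set.mem_preimage,
        Set.mem_Iic, Set.mem_Iio, Set.mem_setOf_eq]
      constructor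
      · rintro ⟨h1, h2⟩
        exact (h1.lt_or_eq).resolve_left h2
      · intro h
        rw [h]
        exact ⟨le_refl z, lt_irrefl z⟩
    rw [hfib] at hsdiff
    rw [eq_comm, ← hsdiff]
    abel
  have step7 : ∑ z ∈ A, ∑ y ∈ (Set.toFinite {y : α | φ y = z}).toFinset,
        kF K y * amb K ^ (rho x - 1 - rho y)
      = ∑ y ∈ (Set.toFinite (φ ⁻¹' Set.Iio x)).toFinset,
          kF K y * amb K ^ (rho x - 1 - rho y) := by
    have e3 : ∀ z ∈ A, (Set.toFinite {y : α | φ y = z}).toFinset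
        = ((Set.toFinite (φ ⁻¹' Set.Iio x)).toFinset).filter (fun y => φ y = z) := by
      intro z hz
      rw [hmemA] at hz
      apply Finset.ext
      intro y
      simp only [Set.Finite.mem_toFinset, Set.mem_setOf_eq, Finset.mem_filter,
        Set.mem_preimage, Set.mem_Iio]
      constructor
      · intro h
        exact ⟨h ▸ hz, h⟩
      · tauto
    calc ∑ z ∈ A, ∑ y ∈ (Set.toFinite {y : α | φ y = z}).toFinset,
          kF K y * amb K ^ (rho x - 1 - rho y)
        = ∑ z ∈ A, ∑ y ∈ (Set.toFinite (φ ⁻¹' Set.Iio x)).toFinset,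
            if φ y = z then kF K y * amb K ^ (rho x - 1 - rho y) else 0 := by
          apply Finset.sum_congr rfl
          intro z hz
          rw [e3 z hz, Finset.sum_filter]
      _ = ∑ y ∈ (Set.toFinite (φ ⁻¹' Set.Iio x)).toFinset, ∑ z ∈ A,
            if φ y = z then kF K y * amb K ^ (rho x - 1 - rho y) else 0 :=
          Finset.sum_comm
      _ = ∑ y ∈ (Set.toFinite (φ ⁻¹' Set.Iio x)).toFinset,
            kF K y * amb K ^ (rho x - 1 - rho y) := by
          apply Finset.sum_congr rfl
          intro y hy
          rw [Set.Finite.mem_toFinset, Set.mem_preimage, Set.mem_Iio] at hy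
          rw [Finset.sum_ite_eq A (φ y)
            (fun _ => kF K y * amb K ^ (rho x - 1 - rho y)), if_pos ((hmemA _).mpr hy)]
  calc ∑ z ∈ A, ellF K φ z * HF K z x
      = (∑ z ∈ A, ellF K φ z * amb K ^ (rho x - rho z - 1))
        + ∑ z ∈ A, ∑ u ∈ (Set.toFinite (Set.Ioo z x)).toFinset,
            (ellF K φ z * HF K z u) * (lb K * amb K ^ (rho x - rho u - 1)) := step12
    _ = (∑ z ∈ A, ellF K φ z * amb K ^ (rho x - rho z - 1))
        + ∑ u ∈ A, ∑ z ∈ (Set.toFinite (Set.Iio u)).toFinset,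
            (ellF K φ z * HF K z u) * (lb K * amb K ^ (rho x - rho u - 1)) := by
        rw [step3]
    _ = (∑ z ∈ A, ellF K φ z * amb K ^ (rho x - rho z - 1))
        + ∑ u ∈ A, psiS K (φ ⁻¹' Set.Iio u) ⊥ (rho u - 1)
            * (lb K * amb K ^ (rho x - rho u - 1)) := by
        rw [Finset.sum_congr rfl step4]
    _ = ∑ z ∈ A, (psiS K (φ ⁻¹' Set.Iic z) ⊥ (rho z) * amb K ^ (rho x - rho z - 1)
        - psiS K (φ ⁻¹' Set.Iio z) ⊥ (rho z - 1) * amb K ^ (rho x - rho z)) := step5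
    _ = ∑ z ∈ A, ∑ y ∈ (Set.toFinite {y : α | φ y = z}).toFinset,
          kF K y * amb K ^ (rho x - 1 - rho y) := Finset.sum_congr rfl step6
    _ = ∑ y ∈ (Set.toFinite (φ ⁻¹' Set.Iio x)).toFinset,
          kF K y * amb K ^ (rho x - 1 - rho y) := step7
    _ = psiS K (φ ⁻¹' Set.Iio x) ⊥ (rho x - 1) :=
        (expandG' K hmono hrk hbot x).symm

end AuxBmain


section AuxBoundary
set_option linter.unusedSectionVars false

variable {α β : Type} [PartialOrder α] [Finite α] [OrderBot α]
  [PartialOrder β] [Finite β] [OrderBot β] [OrderTop β] {n : ℕ} {φ : α → β}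

lemma finsum_mem_const_int {γ : Type} (s : Set γ) (hs : s.Finite) (c : ℤ) :
    ∑ᶠ i ∈ s, c = s.ncard • c := by
  rw [finsum_mem_eq_finite_toFinset_sum _ hs, Finset.sum_const,
    (Set.ncard_eq_toFinset_card s hs)]

lemma neg_one_pow_pred_add (hn : 1 ≤ n) : ((-1 : ℤ)) ^ (n - 1) + (-1) ^ n = 0 := by
  obtain ⟨m, rfl⟩ : ∃ m, n = m + 1 := ⟨n - 1, by omega⟩
  simp [pow_succ]

lemma boundary_eq (hGα : IsGradedOfRank α n) (hGβ : IsGradedOfRank β n)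
    (hφ : IsSFS φ) : boundary α n = φ ⁻¹' (Set.Iio (⊤ : β)) := by
  obtain ⟨hmono, hrk, hsurj, hlift, hsum⟩ := hφ
  have hsep : ∀ x : α, {z ∈ (Set.univ : Set α) | x ⋖ z} = {z | x ⋖ z} := by
    intro x; ext z; simp
  apply Set.eq_of_subset_of_subset
  · rintro y ⟨-, x, -, hx, hcov, hyx⟩
    rw [hsep] at hcov
    obtain ⟨z₀, hz₀⟩ := Set.ncard_eq_one.mp hcov
    have hxz₀ : x ⋖ z₀ := by
      have : z₀ ∈ {z | x ⋖ z} := by rw [hz₀]; exact rfl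
      exact this
    have hz₀n : rho z₀ ≤ n := rho_le_graded hGα z₀
    have hxlt : rho x < rho z₀ := rho_lt_rho hxz₀.lt
    have hn : 1 ≤ n := by omega
    have hz₀rho : rho z₀ = n := by omega
    -- show φ x ≠ ⊤
    have hφx : φ x ≠ ⊤ := by
      intro htop
      have hset : {y' | φ y' = ⊤ ∧ x ≤ y'} = ({x, z₀} : Set α) := by
        ext y'
        simp only [Set.mem_setOf_eq, Set.mem_insert_iff, Set.mem_singleton_iff]
        constructor
        · rintro ⟨h1, h2⟩
          rcases eq_or_lt_of_le h2 with rfl | h2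
          · exact Or.inl rfl
          · right
            have hy'cov : x ⋖ y' := (rho_cover_top hGα hn hx h2).2
            have : y' ∈ {z | x ⋖ z} := hy'cov
            rw [hz₀] at this
            exact this
        · rintro (rfl | rfl)
          · exact ⟨htop, le_refl _⟩
          · refine ⟨?_, hxz₀.lt.le⟩
            exact le_antisymm le_top (htop ▸ hmono hxz₀.lt.le)
      have hsum' := hsum x ⊤ (le_top)
      rw [hset, finsum_mem_pair hxz₀.lt.ne] at hsum'
      rw [hx, hz₀rho] at hsum'
      rw [neg_one_pow_pred_add hn] at hsum'
      exact absurd hsum'.symm (pow_ne_zero _ (by norm_num))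
    have : φ y ≤ φ x := hmono hyx
    have : φ y < ⊤ := lt_of_le_of_lt this (lt_top_iff_ne_top.mpr hφx)
    exact this
  · intro y hy
    have hy' : φ y < ⊤ := hy
    obtain ⟨w, ⟨hw1, hw2⟩, hwmax⟩ := Set.Finite.exists_maximalFor id
      {w : β | φ y ≤ w ∧ w < ⊤} (Set.toFinite _) ⟨φ y, le_refl _, hy'⟩
    have hcovw : w ⋖ (⊤ : β) := by
      refine ⟨hw2, fun c hc1 hc2 => ?_⟩
      have := hwmax (j := c) ⟨hw1.trans hc1.le, hc2⟩ hc1.le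
      exact hc1.not_ge this
    obtain ⟨hwrho, hn⟩ := rho_coatom hGβ hcovw
    obtain ⟨x, hyx, hφx, hρx⟩ := hlift y w hw1
    have hρx' : rho x = n - 1 := by rw [hρx, hwrho]
    have hsetF : {y' | φ y' = ⊤ ∧ x ≤ y'} = {z | x ⋖ z} := by
      ext y'
      simp only [Set.mem_setOf_eq]
      constructor
      · rintro ⟨h1, h2⟩
        have hne : y' ≠ x := by
          intro h
          rw [h, hφx] at h1
          exact hw2.ne h1
        have hlt : x < y' := lt_of_le_of_ne h2 (Ne.symm hne)
        exact (rho_cover_top hGα hn hρx' hlt).2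
      · intro hcov
        have hz : rho y' = n := (rho_cover_top hGα hn hρx' hcov.lt).1
        have hφtop : φ y' = ⊤ := by
          apply eq_top_of_rho_le hGβ
          rw [← hz]
          exact hrk y'
        exact ⟨hφtop, hcov.lt.le⟩
    have hsum' := hsum x ⊤ (le_top)
    rw [hsetF] at hsum'
    have hconst : ∀ z ∈ {z : α | x ⋖ z}, ((-1 : ℤ)) ^ rho z = (-1) ^ n := by
      intro z hz
      rw [(rho_cover_top hGα hn hρx' hz.lt).1]
    rw [finsum_mem_congr rfl hconst, finsum_mem_const_int _ (Set.toFinite _),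
      rho_top_graded hGβ, nsmul_eq_mul] at hsum'
    have hone : ({z : α | x ⋖ z}.ncard : ℤ) * (-1) ^ n = 1 * (-1) ^ n := by
      rw [one_mul, hsum']
    have hcard : {z : α | x ⋖ z}.ncard = 1 := by
      exact_mod_cast mul_right_cancel₀ (pow_ne_zero _ (by norm_num)) hone
    refine ⟨trivial, x, trivial, hρx', ?_, hyx⟩
    rw [hsep]
    exact hcard

end AuxBoundary


section AuxReP
set_option linter.unusedSectionVars false

variable (K : Type) [Field K] [CharZero K]

lemma eE_mul_eE : eE K * eE K = 0 := by
  rw [eE, mkRe, ← map_mul, RingQuot.mkAlgHom_rel K ERel.ee, map_zero]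

lemma eE_mul_eA : eE K * eA K = 0 := by
  rw [eE, eA, mkRe, ← map_mul, RingQuot.mkAlgHom_rel K ERel.ea, map_zero]

lemma eE_mul_eB : eE K * eB K = 0 := by
  rw [eE, eB, mkRe, ← map_mul, RingQuot.mkAlgHom_rel K ERel.eb, map_zero]

lemma eA_mul_eE : eA K * eE K = 0 := by
  rw [eE, eA, mkRe, ← map_mul, RingQuot.mkAlgHom_rel K ERel.ae, map_zero]

lemma eB_mul_eE : eB K * eE K = 0 := by
  rw [eE, eB, mkRe, ← map_mul, RingQuot.mkAlgHom_rel K ERel.be, map_zero]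

/-- The retraction `R^e_Ψ → K⟨a, b⟩` killing `e`. -/
def retR : ReP K →ₐ[K] FA K :=
  RingQuot.liftAlgHom K ⟨FreeAlgebra.lift K (fun i : Fin 3 =>
    if i = 0 then la K else if i = 1 then lb K else 0), by
      rintro x y h
      induction h <;> simp [FreeAlgebra.lift_ι_apply]⟩

lemma retR_eA : retR K (eA K) = la K := by
  rw [eA, mkRe, retR, RingQuot.liftAlgHom_mkAlgHom_apply]
  simp [FreeAlgebra.lift_ι_apply]

lemma retR_eB : retR K (eB K) = lb K := by
  rw [eB, mkRe, retR, RingQuot.liftAlgHom_mkAlgHom_apply]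
  simp [FreeAlgebra.lift_ι_apply]

lemma retR_eE : retR K (eE K) = 0 := by
  rw [eE, mkRe, retR, RingQuot.liftAlgHom_mkAlgHom_apply]
  simp [FreeAlgebra.lift_ι_apply]

lemma retR_abToRe (p : FA K) : retR K (abToRe K p) = p := by
  have h : (retR K).comp (abToRe K) = AlgHom.id K (FA K) := by
    apply FreeAlgebra.hom_ext
    funext i
    fin_cases i <;>
      simp [abToRe, FreeAlgebra.lift_ι_apply, retR_eA, retR_eB, la, lb]
  calc retR K (abToRe K p) = ((retR K).comp (abToRe K)) p := rfl
    _ = p := by rw [h]; rfl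

lemma abToRe_cdToAB (p : FA K) : abToRe K (cdToAB K p) = cdToRe K p := by
  have h : (abToRe K).comp (cdToAB K) = cdToRe K := by
    apply FreeAlgebra.hom_ext
    funext i
    fin_cases i <;>
      simp [abToRe, cdToAB, cdToRe, FreeAlgebra.lift_ι_apply, lc, ld, eC, eD,
        map_add, map_mul, la, lb]
  calc abToRe K (cdToAB K p) = ((abToRe K).comp (cdToAB K)) p := rfl
    _ = cdToRe K p := by rw [h]

lemma retR_cdToRe (p : FA K) : retR K (cdToRe K p) = cdToAB K p := by
  rw [← abToRe_cdToAB, retR_abToRe]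

/-- Evaluation `a, b ↦ 0`, `e ↦ ε` in the dual numbers. -/
def epsR : ReP K →ₐ[K] DualNumber K :=
  RingQuot.liftAlgHom K ⟨FreeAlgebra.lift K (fun i : Fin 3 =>
    if i = 2 then (DualNumber.eps : DualNumber K) else 0), by
      rintro x y h
      induction h <;>
        simp [FreeAlgebra.lift_ι_apply, DualNumber.eps_mul_eps]⟩

lemma epsR_eE : epsR K (eE K) = DualNumber.eps := by
  rw [eE, mkRe, epsR, RingQuot.liftAlgHom_mkAlgHom_apply]
  simp [FreeAlgebra.lift_ι_apply]

lemma epsR_abToRe (p : FA K) :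
    epsR K (abToRe K p) = algebraMap K _ (FreeAlgebra.algebraMapInv p) := by
  have h : (epsR K).comp (abToRe K)
      = (Algebra.ofId K (DualNumber K)).comp (FreeAlgebra.algebraMapInv) := by
    apply FreeAlgebra.hom_ext
    funext i
    fin_cases i <;>
      simp [abToRe, FreeAlgebra.lift_ι_apply, eA, eB, mkRe, epsR,
        RingQuot.liftAlgHom_mkAlgHom_apply, Algebra.ofId_apply, la, lb,
        FreeAlgebra.algebraMapInv]
  calc epsR K (abToRe K p) = ((epsR K).comp (abToRe K)) p := rfl
    _ = algebraMap K _ (FreeAlgebra.algebraMapInv p) := by rw [h]; rfl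

lemma eE_mul_abToRe (p : FA K) :
    eE K * abToRe K p = (FreeAlgebra.algebraMapInv p : K) • eE K ∧
      abToRe K p * eE K = (FreeAlgebra.algebraMapInv p : K) • eE K := by
  induction p using FreeAlgebra.induction with
  | grade0 r =>
    rw [AlgHom.commutes (abToRe K) r]
    have h1 : FreeAlgebra.algebraMapInv ((algebraMap K (FA K)) r) = r := by simp
    rw [h1]
    constructor
    · rw [← Algebra.commutes r (eE K), ← Algebra.smul_def]
    · exact (Algebra.smul_def r (eE K)).symm
  | grade1 i =>
    have habToRe : abToRe K (FreeAlgebra.ι K i) = if i = 0 then eA K else eB K := by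
      simp [abToRe, FreeAlgebra.lift_ι_apply]
    have hcst : FreeAlgebra.algebraMapInv (FreeAlgebra.ι K i) = (0 : K) := by
      simp [FreeAlgebra.algebraMapInv, FreeAlgebra.lift_ι_apply]
    rw [habToRe, hcst, zero_smul]
    fin_cases i
    · simpa using ⟨eE_mul_eA K, eA_mul_eE K⟩
    · simpa using ⟨eE_mul_eB K, eB_mul_eE K⟩
  | mul a b ha hb =>
    obtain ⟨ha1, ha2⟩ := ha
    obtain ⟨hb1, hb2⟩ := hb
    rw [map_mul, map_mul]
    constructor
    · rw [← mul_assoc, ha1, smul_mul_assoc, hb1, smul_smul]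
    · rw [mul_assoc, hb2, mul_smul_comm, ha2, smul_smul,
        mul_comm (FreeAlgebra.algebraMapInv b) (FreeAlgebra.algebraMapInv a)]
  | add a b ha hb =>
    obtain ⟨ha1, ha2⟩ := ha
    obtain ⟨hb1, hb2⟩ := hb
    rw [map_add, map_add]
    constructor
    · rw [mul_add, ha1, hb1, ← add_smul]
    · rw [add_mul, ha2, hb2, ← add_smul]

lemma cst_cdToAB (p : FA K) :
    FreeAlgebra.algebraMapInv (cdToAB K p) = FreeAlgebra.algebraMapInv p := by
  have h : (FreeAlgebra.algebraMapInv (R := K) (X := Fin 2)).comp (cdToAB K)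
      = FreeAlgebra.algebraMapInv := by
    apply FreeAlgebra.hom_ext
    funext i
    fin_cases i <;>
      simp [cdToAB, FreeAlgebra.lift_ι_apply, lc, ld, la, lb,
        FreeAlgebra.algebraMapInv]
  calc FreeAlgebra.algebraMapInv (cdToAB K p)
      = ((FreeAlgebra.algebraMapInv (R := K) (X := Fin 2)).comp (cdToAB K)) p := rfl
    _ = FreeAlgebra.algebraMapInv p := by rw [h]

lemma eE_mul_cdToRe (p : FA K) :
    eE K * cdToRe K p = (FreeAlgebra.algebraMapInv p : K) • eE K ∧
      cdToRe K p * eE K = (FreeAlgebra.algebraMapInv p : K) • eE K := by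
  rw [← abToRe_cdToAB, ← cst_cdToAB]
  exact eE_mul_abToRe K (cdToAB K p)

lemma rephi_decomp (z : RePhi K) :
    ∃ (p : FA K) (t : K), (z : ReP K) = cdToRe K p + t • eE K := by
  have hz : (z : ReP K) ∈ Algebra.adjoin K {eC K, eD K, eE K} := z.2
  refine Algebra.adjoin_induction
    (p := fun x _ => ∃ (p : FA K) (t : K), x = cdToRe K p + t • eE K)
    ?_ ?_ ?_ ?_ hz
  · -- mem
    rintro x hx
    simp only [Set.mem_insert_iff, Set.mem_singleton_iff] at hx
    rcases hx with rfl | rfl | rfl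
    · refine ⟨FreeAlgebra.ι K 0, 0, ?_⟩
      simp [cdToRe, FreeAlgebra.lift_ι_apply]
    · refine ⟨FreeAlgebra.ι K 1, 0, ?_⟩
      simp [cdToRe, FreeAlgebra.lift_ι_apply]
    · exact ⟨0, 1, by simp⟩
  · -- algebraMap
    intro r
    exact ⟨algebraMap K _ r, 0, by simp [AlgHom.commutes]⟩
  · -- add
    rintro x y hx hy ihx ihy
    obtain ⟨p1, t1, e1⟩ := ihx
    obtain ⟨p2, t2, e2⟩ := ihy
    refine ⟨p1 + p2, t1 + t2, ?_⟩
    rw [e1, e2, map_add, add_smul]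
    abel
  · -- mul
    rintro x y hx hy ihx ihy
    obtain ⟨p1, t1, e1⟩ := ihx
    obtain ⟨p2, t2, e2⟩ := ihy
    refine ⟨p1 * p2, t2 * FreeAlgebra.algebraMapInv p1
      + t1 * FreeAlgebra.algebraMapInv p2, ?_⟩
    rw [e1, e2, add_mul, mul_add, mul_add, map_mul]
    rw [mul_smul_comm, (eE_mul_cdToRe K p1).2, smul_mul_assoc, (eE_mul_cdToRe K p2).1]
    rw [smul_mul_assoc, mul_smul_comm, eE_mul_eE, smul_zero, smul_zero, add_zero]
    rw [smul_smul, smul_smul, add_smul]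
    rw [mul_comm t2 (FreeAlgebra.algebraMapInv p1),
      mul_comm t1 (FreeAlgebra.algebraMapInv p2),
      mul_comm (FreeAlgebra.algebraMapInv p1) t2,
      mul_comm (FreeAlgebra.algebraMapInv p2) t1]
    abel

/-- Evaluation of the specialization `sp2` on interval `cd`-indices. -/
lemma sp2_eval {sp2 : RePhi K →ₗ[K] FA K} (hsp : IsESpecialization K sp2)
    (z : RePhi K) (q : FA K) (hz : (z : ReP K) = abToRe K q) : sp2 z = q := by
  obtain ⟨p, t, hpt⟩ := rephi_decomp K z
  have heq : cdToRe K p + t • eE K = abToRe K q := by rw [← hpt, hz]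
  -- apply the dual-number evaluation to show `t = 0`
  have heps := congrArg (epsR K) heq
  rw [map_add, map_smul, epsR_eE, epsR_abToRe, ← abToRe_cdToAB, epsR_abToRe,
    cst_cdToAB] at heps
  have hsnd := congrArg TrivSqZeroExt.snd heps
  simp only [TrivSqZeroExt.snd_add, TrivSqZeroExt.snd_smul] at hsnd
  have hsnd0 : (algebraMap K (DualNumber K) (FreeAlgebra.algebraMapInv p)).snd = 0 := rfl
  have hsnd1 : (DualNumber.eps : DualNumber K).snd = 1 := rfl
  have hsnd2 : (algebraMap K (DualNumber K) (FreeAlgebra.algebraMapInv q)).snd = 0 := rfl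
  rw [hsnd0, hsnd1, hsnd2, smul_eq_mul, mul_one, zero_add] at hsnd
  rw [hsnd, zero_smul, add_zero] at heq hpt
  have h1 : sp2 z = cdToAB K p := hsp.2 z p hpt
  have h2 : cdToAB K p = q := by
    have := congrArg (retR K) heq
    rwa [retR_cdToRe, retR_abToRe] at this
  rw [h1, h2]

end AuxReP

/-- Let `φ : Γ → B` be a strong formal subdivision of rank `0`, `Γ`
lower Eulerian and `B` Eulerian (of rank `n`).  Under the specialization
`c' ↦ c, d' ↦ d, e ↦ 1`, the mixed `cd`-index
`Ω_φ = ∑_{x ∈ B} ℓ^Φ_{Γ_x}(c', d') ⊗ Φ_{[x, 1̂]}(c, d, e) ∈ R_Ω`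
specializes to the `cd`-index `Φ_Γ = ℓ^Φ_Γ + Φ_{∂Γ} = (Ψ_Γ - Ψ_{∂Γ}·a) + Ψ_{∂Γ}`
of `Γ`. -/
theorem mixedCdIndex_specializes_to_cdIndex
    (K : Type) [Field K] [CharZero K]
    (α β : Type) [PartialOrder α] [Finite α] [OrderBot α]
    [PartialOrder β] [Finite β] [OrderBot β] [OrderTop β] (n : ℕ)
    (hΓ : IsLowerEulerianOfRank α n) (hB : IsEulerianOfRank β n)
    (φ : α → β) (hφ : IsSFS φ)
    (L : β → FA K) (hL : IsLocalCdFamily K φ L)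
    (P : β → β → RePhi K) (hP : IsIntervalCdFamily K P)
    (sp2 : RePhi K →ₗ[K] FA K) (hsp : IsESpecialization K sp2) :
    (LinearMap.mul' K (FA K))
        ((TensorProduct.map (cdToAB K).toLinearMap sp2)
          (∑ᶠ x : β, L x ⊗ₜ[K] P x ⊤))
      = psiS K (Set.univ : Set α) ⊥ n
          - psiS K (boundary α n) ⊥ (n - 1) * la K
          + psiS K (boundary α n) ⊥ (n - 1) := by
  classical
  haveI : Fintype β := Fintype.ofFinite β
  have hmono : Monotone φ := hφ.1
  have hrk : ∀ y, rho y ≤ rho (φ y) := hφ.2.1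
  have hsurj : Function.Surjective φ := hφ.2.2.1
  have hbot : φ ⊥ = ⊥ := phi_bot hmono hsurj
  have hGα : IsGradedOfRank α n := hΓ.2.1
  have hGβ : IsGradedOfRank β n := hB.2.2.1
  have hrtop : rho (⊤ : β) = n := rho_top_graded hGβ
  have hbd : boundary α n = φ ⁻¹' (Set.Iio (⊤ : β)) := boundary_eq hGα hGβ hφ
  -- compute the specialization of the interval factors
  have hsp2top : sp2 (P ⊤ ⊤) = 1 := by
    rw [(hP ⊤ ⊤).1 rfl]
    exact hsp.1
  have hsp2 : ∀ x : β, x < ⊤ →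
      sp2 (P x ⊤) = psiS K (Set.Ico x ⊤) x (rho (⊤ : β) - rho x - 1) := by
    intro x hx
    exact sp2_eval K hsp _ _ ((hP x ⊤).2 hx)
  -- expand the finsum
  rw [finsum_eq_sum_of_fintype, map_sum, map_sum]
  have hsummand : ∀ x : β, (LinearMap.mul' K (FA K))
      ((TensorProduct.map (cdToAB K).toLinearMap sp2) (L x ⊗ₜ[K] P x ⊤))
      = cdToAB K (L x) * sp2 (P x ⊤) := by
    intro x
    rw [TensorProduct.map_tmul, LinearMap.mul'_apply]
    rfl
  rw [Finset.sum_congr rfl (fun x _ => hsummand x)]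
  -- split off the top element
  rw [← Finset.add_sum_erase _ _ (Finset.mem_univ (⊤ : β))]
  -- the top term
  have htopterm : cdToAB K (L ⊤) * sp2 (P ⊤ ⊤)
      = psiS K (Set.univ : Set α) ⊥ n
        - psiS K (φ ⁻¹' (Set.Iio (⊤ : β))) ⊥ (n - 1) * la K := by
    rw [hsp2top, mul_one, hL ⊤]
    have h1 : φ ⁻¹' (Set.Iic (⊤ : β)) = (Set.univ : Set α) := by
      ext y; simp
    rw [h1, hrtop]
  -- the lower terms
  have hlowterms : ∑ x ∈ Finset.univ.erase (⊤ : β), cdToAB K (L x) * sp2 (P x ⊤)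
      = psiS K (φ ⁻¹' (Set.Iio (⊤ : β))) ⊥ (n - 1) := by
    have hers : Finset.univ.erase (⊤ : β)
        = (Set.toFinite (Set.Iio (⊤ : β))).toFinset := by
      apply Finset.ext
      intro x
      simp only [Finset.mem_erase, Finset.mem_univ, and_true,
        Set.Finite.mem_toFinset, Set.mem_Iio]
      exact lt_top_iff_ne_top.symm
    rw [hers]
    have hterm : ∀ x ∈ (Set.toFinite (Set.Iio (⊤ : β))).toFinset,
        cdToAB K (L x) * sp2 (P x ⊤) = ellF K φ x * HF K x ⊤ := by
      intro x hx
      rw [Set.Finite.mem_toFinset, Set.mem_Iio] at hx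
      rw [hL x, hsp2 x hx]
      rfl
    rw [Finset.sum_congr rfl hterm, Bmain K hmono hrk hbot ⊤, hrtop]
  rw [htopterm, hlowterms, hbd]


end CDIndex
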